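/- Let K be a nonempty compact convex subset of a real locally convex topological vector space. Let S be a partially ordered additive commutative monoid in which every monotone nondecreasing sequence has a least upper bound. Let d : S → (K → ℝ) be a map such that: each d(x) is a nonnegative lower semicontinuous function on K; d is additive, i.e. d(x + y)(τ) = d(x)(τ) + d(y)(τ) for all x, y ∈ S and τ ∈ K; d is order-preserving, i.e. x ≤ y implies d(x)(τ) ≤ d(y)(τ) for all τ; and d preserves suprema of monotone nondecreasing sequences, i.e. if (x_i) is nondecreasing with least upper bound y in S then d(y)(τ) = sup_i d(x_i)(τ) for all τ ∈ K. Assume strict comparison: whenever x, y ∈ S satisfy d(x)(τ) < d(y)(τ) for all τ ∈ K, then x ≤ y. Assume density: for every continuous affine function f : K → ℝ with f(τ) > 0 for all τ, and every ε > 0, there exists x ∈ S with |f(τ) − d(x)(τ)| < ε for all τ ∈ K. Then for every function g : K → ℝ which is the pointwise supremum of a sequence (f_i) of strictly positive continuous affine functions on K with f_i(τ) < f_{i+1}(τ) for all τ and i, there exists y ∈ S such that d(y)(τ) = g(τ) for all τ ∈ K. -/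

import Mathlib

/-- Let `K` be a nonempty compact convex subset of a real locally convex
topological vector space, `S` a partially ordered additive commutative monoid in which every
monotone nondecreasing sequence has a least upper bound, and `d : S → (V → ℝ)` a map whose
values are nonnegative lower semicontinuous functions on `K`, which is additive,
order-preserving, and preserves suprema of monotone sequences. Assume strict comparison and
density of `{d x}` among strictly positive continuous affine functions. Then every pointwise
supremum `g` of a strictly increasing sequence of strictly positive continuous affine
functions on `K` equals `d y` on `K` for some `y ∈ S`. -/
theorem stmt3 {V : Type*} [AddCommGroup V] [Module ℝ V] [TopologicalSpace V]
    [IsTopologicalAddGroup V] [ContinuousSMul ℝ V] [LocallyConvexSpace ℝ V]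
    (K : Set V) (hKne : K.Nonempty) (hKcpt : IsCompact K) (hKconv : Convex ℝ K)
    {S : Type*} [AddCommMonoid S] [PartialOrder S]
    (hlub : ∀ x : ℕ → S, Monotone x → ∃ y : S, IsLUB (Set.range x) y)
    (d : S → V → ℝ)
    (hnonneg : ∀ s : S, ∀ τ ∈ K, 0 ≤ d s τ)
    (hlsc : ∀ s : S, LowerSemicontinuousOn (d s) K)
    (hadd : ∀ s t : S, ∀ τ ∈ K, d (s + t) τ = d s τ + d t τ)
    (hord : ∀ s t : S, s ≤ t → ∀ τ ∈ K, d s τ ≤ d t τ)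
    (hsupp : ∀ x : ℕ → S, Monotone x → ∀ y : S, IsLUB (Set.range x) y →
      ∀ τ ∈ K, IsLUB (Set.range fun i : ℕ => d (x i) τ) (d y τ))
    (hsc : ∀ s t : S, (∀ τ ∈ K, d s τ < d t τ) → s ≤ t)
    (hdense : ∀ f : V → ℝ, ContinuousOn f K →
      (∀ x ∈ K, ∀ y ∈ K, ∀ a b : ℝ, 0 ≤ a → 0 ≤ b → a + b = 1 →
        f (a • x + b • y) = a * f x + b * f y) →
      (∀ τ ∈ K, 0 < f τ) →
      ∀ ε : ℝ, 0 < ε → ∃ x : S, ∀ τ ∈ K, |f τ - d x τ| < ε) :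
    ∀ g : V → ℝ,
      (∃ f : ℕ → V → ℝ,
        (∀ i : ℕ, ContinuousOn (f i) K) ∧
        (∀ i : ℕ, ∀ x ∈ K, ∀ y ∈ K, ∀ a b : ℝ, 0 ≤ a → 0 ≤ b → a + b = 1 →
          f i (a • x + b • y) = a * f i x + b * f i y) ∧
        (∀ i : ℕ, ∀ τ ∈ K, 0 < f i τ) ∧
        (∀ i : ℕ, ∀ τ ∈ K, f i τ < f (i + 1) τ) ∧
        (∀ τ ∈ K, IsLUB (Set.range fun i : ℕ => f i τ) (g τ))) →
      ∃ y : S, ∀ τ ∈ K, d y τ = g τ := by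

  rintro g ⟨f, hfc, hfaff, hfpos, hfmono, hg⟩
  have hδ : ∀ i : ℕ, ∃ δ : ℝ, 0 < δ ∧ ∀ τ ∈ K, δ ≤ f (i + 1) τ - f i τ := by
    intro i
    obtain ⟨τ0, hτ0, hmin⟩ := hKcpt.exists_isMinOn hKne ((hfc (i + 1)).sub (hfc i))
    exact ⟨f (i + 1) τ0 - f i τ0, sub_pos.2 (hfmono i τ0 hτ0), fun τ hτ => hmin hτ⟩
  choose δ hδpos hδle using hδ
  set ε : ℕ → ℝ := fun i => Nat.rec (δ 0 / 3) (fun i _ => min (δ i) (δ (i + 1)) / 3) i with hε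
  have hε0 : ε 0 = δ 0 / 3 := rfl
  have hεs : ∀ i, ε (i + 1) = min (δ i) (δ (i + 1)) / 3 := fun i => rfl
  have hεpos : ∀ i, 0 < ε i := by
    intro i
    cases i with
    | zero => rw [hε0]; linarith [hδpos 0]
    | succ i => rw [hεs]; have := hδpos i; have := hδpos (i + 1)
                have := lt_min this ‹0 < δ i›; simp [lt_min_iff]; constructor <;> linarith
  have hεδ : ∀ i, ε i ≤ δ i / 3 := by
    intro i
    cases i with
    | zero => rw [hε0]
    | succ i => rw [hεs]; have := min_le_right (δ i) (δ (i + 1)); linarith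
  have hεδ' : ∀ i, ε (i + 1) ≤ δ i / 3 := by
    intro i; rw [hεs]; have := min_le_left (δ i) (δ (i + 1)); linarith
  choose x hx using fun i => hdense (f i) (hfc i) (hfaff i) (hfpos i) (ε i) (hεpos i)
  have hxlt : ∀ i, ∀ τ ∈ K, d (x i) τ < f i τ + ε i ∧ f i τ - ε i < d (x i) τ := by
    intro i τ hτ
    have := hx i τ hτ
    rw [abs_sub_lt_iff] at this
    constructor <;> linarith [this.1, this.2]
  have hmonod : ∀ i, ∀ τ ∈ K, d (x i) τ < d (x (i + 1)) τ := by
    intro i τ hτ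
    have h1 := (hxlt i τ hτ).1
    have h2 := (hxlt (i + 1) τ hτ).2
    have h3 := hδle i τ hτ
    have h4 := hεδ i
    have h5 := hεδ' i
    have h6 := hδpos i
    linarith
  have hxmono : Monotone x :=
    monotone_nat_of_le_succ fun i => hsc _ _ (hmonod i)
  obtain ⟨y, hy⟩ := hlub x hxmono
  refine ⟨y, fun τ hτ => ?_⟩
  have hylub := hsupp x hxmono y hy τ hτ
  have hgτ := hg τ hτ
  apply le_antisymm
  · apply hylub.2
    rintro _ ⟨i, rfl⟩
    have h1 := (hxlt i τ hτ).1
    have h4 := hεδ i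
    have h3 := hδle i τ hτ
    have h6 := hδpos i
    have hub : f (i + 1) τ ≤ g τ := hgτ.1 ⟨i + 1, rfl⟩
    simp only
    linarith
  · apply hgτ.2
    rintro _ ⟨i, rfl⟩
    have h2 := (hxlt (i + 1) τ hτ).2
    have h5 := hεδ' i
    have h3 := hδle i τ hτ
    have h6 := hδpos i
    have hub : d (x (i + 1)) τ ≤ d y τ := hylub.1 ⟨i + 1, rfl⟩
    simp only
    linarith
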